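/- arXiv:1110.5449 — 3 statements merged into one kernel-verified Lean document; each statement's English description precedes it below -/
import Mathlib

section
/- For n×n matrices A and B, the Strang splitting satisfies e^{(h/2)B} e^{hA} e^{(h/2)B} = e^{h(A+B)} + O(h³) as h → 0; that is, the difference of the two sides is bounded by C·h³ for small h. -/
open Matrix
attribute [local instance] Matrix.linftyOpNormedAddCommGroup Matrix.linftyOpNormedRing
  Matrix.linftyOpNormedAlgebra

open NormedSpace in
theorem strang_aux {𝔸 : Type*} [NormedRing 𝔸] [NormedAlgebra ℝ 𝔸] [CompleteSpace 𝔸]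
    (a b s : 𝔸) (hs : s = a + b + b) :
    ∃ C δ : ℝ, 0 < C ∧ 0 < δ ∧ ∀ h : ℝ, |h| ≤ δ →
      ‖exp (h • b) * exp (h • a) * exp (h • b) - exp (h • s)‖ ≤ C * |h| ^ 3 := by
  set g : ℝ → 𝔸 := fun t => exp (t • b) * exp (t • a) * exp (t • b) - exp (t • s) with hgdef
  set g1 : ℝ → 𝔸 := fun t =>
      (b * exp (t • b) * exp (t • a) + exp (t • b) * (a * exp (t • a))) * exp (t • b)
        + exp (t • b) * exp (t • a) * (exp (t • b) * b)
        - s * exp (t • s) with hg1def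
  -- first derivative
  have hd1 : ∀ t : ℝ, HasDerivAt g (g1 t) t := by
    intro t
    exact (((hasDerivAt_exp_smul_const' b t).mul (hasDerivAt_exp_smul_const' a t)).mul
      (hasDerivAt_exp_smul_const b t)).sub (hasDerivAt_exp_smul_const' s t)
  have hg0 : g 0 = 0 := by simp [hgdef]
  have hg10 : g1 0 = 0 := by simp [hg1def, hs]; abel
  -- second derivative at 0 vanishes
  have hd2 : HasDerivAt g1 (0 : 𝔸) 0 := by
    have hT1 : HasDerivAt (fun t : ℝ => b * exp (t • b) * exp (t • a))
        (b * (b * exp ((0:ℝ) • b)) * exp ((0:ℝ) • a)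
          + b * exp ((0:ℝ) • b) * (a * exp ((0:ℝ) • a))) 0 :=
      ((hasDerivAt_exp_smul_const' b 0).const_mul b).mul (hasDerivAt_exp_smul_const' a 0)
    have hT2 : HasDerivAt (fun t : ℝ => exp (t • b) * (a * exp (t • a)))
        (b * exp ((0:ℝ) • b) * (a * exp ((0:ℝ) • a))
          + exp ((0:ℝ) • b) * (a * (a * exp ((0:ℝ) • a)))) 0 :=
      (hasDerivAt_exp_smul_const' b 0).mul ((hasDerivAt_exp_smul_const' a 0).const_mul a)
    have hH1 := (hT1.add hT2).mul (hasDerivAt_exp_smul_const (𝕂 := ℝ) b 0)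
    have hH2 := ((hasDerivAt_exp_smul_const' (𝕂 := ℝ) b 0).mul
      (hasDerivAt_exp_smul_const' (𝕂 := ℝ) a 0)).mul
      ((hasDerivAt_exp_smul_const (𝕂 := ℝ) b 0).mul_const b)
    have hH3 := (hasDerivAt_exp_smul_const' (𝕂 := ℝ) s 0).const_mul s
    have H := (hH1.add hH2).sub hH3
    convert H using 1
    · rfl
    · rfl
    subst hs
    simp only [zero_smul, exp_zero, mul_one, one_mul, Pi.add_apply, Pi.mul_apply]
    noncomm_ring
  -- smoothness
  have hexp : ∀ M : 𝔸, ContDiff ℝ 3 (fun t : ℝ => exp (t • M)) := by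
    intro M
    have h2 : ContDiff ℝ 3 (exp : 𝔸 → 𝔸) :=
      contDiff_iff_contDiffAt.mpr fun x => (exp_analytic (𝕂 := ℝ) x).contDiffAt
    exact h2.comp (contDiff_id.smul contDiff_const)
  have hg : ContDiff ℝ 3 g :=
    (((hexp b).mul (hexp a)).mul (hexp b)).sub (hexp s)
  have hderiv_g : deriv g = g1 := funext fun t => (hd1 t).deriv
  have hg1_eq : g1 = iteratedDeriv 1 g := by rw [iteratedDeriv_one, hderiv_g]
  have hD2_eq : deriv g1 = iteratedDeriv 2 g := by
    rw [iteratedDeriv_succ, ← hg1_eq]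
  have hD3_eq : deriv (deriv g1) = iteratedDeriv 3 g := by
    rw [iteratedDeriv_succ, ← hD2_eq]
  have hg1diff : Differentiable ℝ g1 := by
    rw [hg1_eq]; exact hg.differentiable_iteratedDeriv 1 (by norm_num)
  have hD2diff : Differentiable ℝ (deriv g1) := by
    rw [hD2_eq]; exact hg.differentiable_iteratedDeriv 2 (by norm_num)
  have hD3cont : Continuous (deriv (deriv g1)) := by
    rw [hD3_eq]; exact hg.continuous_iteratedDeriv 3 le_rfl
  obtain ⟨C0, hC0⟩ := (isCompact_Icc (a := (-1:ℝ)) (b := 1)).exists_bound_of_continuousOn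
    hD3cont.continuousOn
  set C := max C0 1 with hCdef
  have hC1 : (1:ℝ) ≤ C := le_max_right _ _
  have hCpos : 0 < C := lt_of_lt_of_le one_pos hC1
  have hCb : ∀ x ∈ Set.Icc (-1:ℝ) 1, ‖deriv (deriv g1) x‖ ≤ C :=
    fun x hx => (hC0 x hx).trans (le_max_left _ _)
  have hD2_0 : deriv g1 0 = 0 := hd2.deriv
  -- step 1 : ‖deriv g1 t‖ ≤ C * |t| on [-1,1]
  have step1 : ∀ t : ℝ, |t| ≤ 1 → ‖deriv g1 t‖ ≤ C * |t| := by
    intro t ht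
    have htm : t ∈ Set.Icc (-1:ℝ) 1 := by rw [Set.mem_Icc]; exact abs_le.1 ht
    have h0m : (0:ℝ) ∈ Set.Icc (-1:ℝ) 1 := by norm_num
    have := (convex_Icc (-1:ℝ) 1).norm_image_sub_le_of_norm_hasDerivWithin_le
      (f := deriv g1) (f' := deriv (deriv g1))
      (fun x hx => ((hD2diff x).hasDerivAt).hasDerivWithinAt) hCb h0m htm
    simpa [hD2_0, Real.norm_eq_abs] using this
  -- membership helper
  have habs : ∀ t x : ℝ, x ∈ Set.uIcc 0 t → |x| ≤ |t| := by
    intro t x hx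
    rw [Set.uIcc_eq_union] at hx
    rcases hx with ⟨h1, h2⟩ | ⟨h1, h2⟩
    · rw [abs_of_nonneg h1]; exact h2.trans (le_abs_self t)
    · rw [abs_of_nonpos h2]; linarith [neg_le_abs t]
  -- step 2 : ‖g1 t‖ ≤ C * |t|^2 for |t| ≤ 1
  have step2 : ∀ t : ℝ, |t| ≤ 1 → ‖g1 t‖ ≤ C * |t| ^ 2 := by
    intro t ht
    have := (convex_uIcc (0:ℝ) t).norm_image_sub_le_of_norm_hasDerivWithin_le
      (f := g1) (f' := deriv g1) (C := C * |t|)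
      (fun x hx => ((hg1diff x).hasDerivAt).hasDerivWithinAt)
      (fun x hx => (step1 x ((habs t x hx).trans ht)).trans
        (mul_le_mul_of_nonneg_left (habs t x hx) hCpos.le))
      Set.left_mem_uIcc Set.right_mem_uIcc
    rw [hg10, sub_zero, sub_zero, Real.norm_eq_abs] at this
    calc ‖g1 t‖ ≤ C * |t| * |t| := this
      _ = C * |t| ^ 2 := by ring
  -- step 3 : ‖g t‖ ≤ C * |t|^3 for |t| ≤ 1
  have step3 : ∀ t : ℝ, |t| ≤ 1 → ‖g t‖ ≤ C * |t| ^ 3 := by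
    intro t ht
    have := (convex_uIcc (0:ℝ) t).norm_image_sub_le_of_norm_hasDerivWithin_le
      (f := g) (f' := g1) (C := C * |t| ^ 2)
      (fun x hx => (hd1 x).hasDerivWithinAt)
      (fun x hx => (step2 x ((habs t x hx).trans ht)).trans
        (mul_le_mul_of_nonneg_left
          (pow_le_pow_left₀ (abs_nonneg x) (habs t x hx) 2) hCpos.le))
      Set.left_mem_uIcc Set.right_mem_uIcc
    rw [hg0, sub_zero, sub_zero, Real.norm_eq_abs] at this
    calc ‖g t‖ ≤ C * |t| ^ 2 * |t| := this
      _ = C * |t| ^ 3 := by ring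
  exact ⟨C, 1, hCpos, one_pos, fun h hh => step3 h hh⟩

/-- The Strang splitting is a second-order approximation:
`e^{(h/2)B} e^{hA} e^{(h/2)B} = e^{h(A+B)} + O(h³)` as `h → 0`. -/
theorem strang_splitting_second_order (n : ℕ)
    (A B : Matrix (Fin n) (Fin n) ℝ) :
    ∃ C δ : ℝ, 0 < C ∧ 0 < δ ∧ ∀ h : ℝ, |h| ≤ δ →
      ‖NormedSpace.exp ((h / 2) • B) * NormedSpace.exp (h • A) *
          NormedSpace.exp ((h / 2) • B) -
        NormedSpace.exp (h • (A + B))‖ ≤ C * |h| ^ 3 := by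
  obtain ⟨C, δ, hC, hδ, hb⟩ := strang_aux A ((2:ℝ)⁻¹ • B) (A + B) (by module)
  refine ⟨C, δ, hC, hδ, fun h hh => ?_⟩
  have := hb h hh
  simp only [smul_smul, div_eq_mul_inv, smul_add] at this ⊢
  exact this
end

section
/- For n×n matrices A and B, the Burstein–Mirin combination D(h) = (2/3)(S_AB(h) + S_BA(h)) - (1/3)S(h), where S_AB(h) = e^{(h/2)B}e^{hA}e^{(h/2)B}, S_BA(h) = e^{(h/2)A}e^{hB}e^{(h/2)A}, and S(h) = ½(e^{hA}e^{hB} + e^{hB}e^{hA}), satisfies D(h) = e^{h(A+B)} + O(h⁴). -/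
open Matrix
attribute [local instance] Matrix.linftyOpNormedAddCommGroup Matrix.linftyOpNormedRing
  Matrix.linftyOpNormedAlgebra

section BM

open Nat

set_option linter.unusedSectionVars false

variable {𝔸 : Type*} [NormedRing 𝔸] [NormedAlgebra ℝ 𝔸] [CompleteSpace 𝔸]

/-- Degree-3 Taylor polynomial of the exponential. -/
noncomputable def bmP (X : 𝔸) : 𝔸 := 1 + X + (1/2 : ℝ) • (X * X) + (1/6 : ℝ) • (X * X * X)

/-- The explicit degree ≥ 4 residual of the Burstein–Mirin polynomial combination. -/
noncomputable def bmW (h : ℝ) (A B : 𝔸) : 𝔸 :=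
  ((7/288 : ℝ)) • (A * A * A * A) +
    ((1/24 : ℝ)) • (A * A * A * B) +
    ((1/24 : ℝ)) • (A * A * B * A) +
    ((1/24 : ℝ)) • (A * A * B * B) +
    ((1/24 : ℝ)) • (A * B * A * A) +
    ((1/12 : ℝ)) • (A * B * B * A) +
    ((1/24 : ℝ)) • (A * B * B * B) +
    ((1/24 : ℝ)) • (B * A * A * A) +
    ((1/12 : ℝ)) • (B * A * A * B) +
    ((1/24 : ℝ)) • (B * A * B * B) +
    ((1/24 : ℝ)) • (B * B * A * A) +
    ((1/24 : ℝ)) • (B * B * A * B) +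
    ((1/24 : ℝ)) • (B * B * B * A) +
    ((7/288 : ℝ)) • (B * B * B * B) +
    ((1/288 : ℝ) * h ^ 1) • (A * A * A * A * A) +
    ((1/144 : ℝ) * h ^ 1) • (A * A * A * B * A) +
    ((1/144 : ℝ) * h ^ 1) • (A * A * A * B * B) +
    ((1/96 : ℝ) * h ^ 1) • (A * A * B * A * A) +
    ((1/48 : ℝ) * h ^ 1) • (A * A * B * B * A) +
    ((1/144 : ℝ) * h ^ 1) • (A * A * B * B * B) +
    ((1/144 : ℝ) * h ^ 1) • (A * B * A * A * A) +
    ((1/48 : ℝ) * h ^ 1) • (A * B * B * A * A) +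
    ((1/36 : ℝ) * h ^ 1) • (A * B * B * B * A) +
    ((1/36 : ℝ) * h ^ 1) • (B * A * A * A * B) +
    ((1/48 : ℝ) * h ^ 1) • (B * A * A * B * B) +
    ((1/144 : ℝ) * h ^ 1) • (B * A * B * B * B) +
    ((1/144 : ℝ) * h ^ 1) • (B * B * A * A * A) +
    ((1/48 : ℝ) * h ^ 1) • (B * B * A * A * B) +
    ((1/96 : ℝ) * h ^ 1) • (B * B * A * B * B) +
    ((1/144 : ℝ) * h ^ 1) • (B * B * B * A * A) +
    ((1/144 : ℝ) * h ^ 1) • (B * B * B * A * B) +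
    ((1/288 : ℝ) * h ^ 1) • (B * B * B * B * B) +
    ((1/3456 : ℝ) * h ^ 2) • (A * A * A * A * A * A) +
    ((1/576 : ℝ) * h ^ 2) • (A * A * A * B * A * A) +
    ((1/288 : ℝ) * h ^ 2) • (A * A * A * B * B * A) +
    ((1/576 : ℝ) * h ^ 2) • (A * A * B * A * A * A) +
    ((1/192 : ℝ) * h ^ 2) • (A * A * B * B * A * A) +
    ((1/144 : ℝ) * h ^ 2) • (A * A * B * B * B * A) +
    ((1/288 : ℝ) * h ^ 2) • (A * B * B * A * A * A) +
    ((1/144 : ℝ) * h ^ 2) • (A * B * B * B * A * A) +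
    ((1/144 : ℝ) * h ^ 2) • (B * A * A * A * B * B) +
    ((1/288 : ℝ) * h ^ 2) • (B * A * A * B * B * B) +
    ((1/144 : ℝ) * h ^ 2) • (B * B * A * A * A * B) +
    ((1/192 : ℝ) * h ^ 2) • (B * B * A * A * B * B) +
    ((1/576 : ℝ) * h ^ 2) • (B * B * A * B * B * B) +
    ((1/288 : ℝ) * h ^ 2) • (B * B * B * A * A * B) +
    ((1/576 : ℝ) * h ^ 2) • (B * B * B * A * B * B) +
    ((1/3456 : ℝ) * h ^ 2) • (B * B * B * B * B * B) +
    ((1/3456 : ℝ) * h ^ 3) • (A * A * A * B * A * A * A) +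
    ((1/1152 : ℝ) * h ^ 3) • (A * A * A * B * B * A * A) +
    ((1/864 : ℝ) * h ^ 3) • (A * A * A * B * B * B * A) +
    ((1/1152 : ℝ) * h ^ 3) • (A * A * B * B * A * A * A) +
    ((1/576 : ℝ) * h ^ 3) • (A * A * B * B * B * A * A) +
    ((1/864 : ℝ) * h ^ 3) • (A * B * B * B * A * A * A) +
    ((1/864 : ℝ) * h ^ 3) • (B * A * A * A * B * B * B) +
    ((1/576 : ℝ) * h ^ 3) • (B * B * A * A * A * B * B) +
    ((1/1152 : ℝ) * h ^ 3) • (B * B * A * A * B * B * B) +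
    ((1/864 : ℝ) * h ^ 3) • (B * B * B * A * A * A * B) +
    ((1/1152 : ℝ) * h ^ 3) • (B * B * B * A * A * B * B) +
    ((1/3456 : ℝ) * h ^ 3) • (B * B * B * A * B * B * B) +
    ((1/6912 : ℝ) * h ^ 4) • (A * A * A * B * B * A * A * A) +
    ((1/3456 : ℝ) * h ^ 4) • (A * A * A * B * B * B * A * A) +
    ((1/3456 : ℝ) * h ^ 4) • (A * A * B * B * B * A * A * A) +
    ((1/3456 : ℝ) * h ^ 4) • (B * B * A * A * A * B * B * B) +
    ((1/3456 : ℝ) * h ^ 4) • (B * B * B * A * A * A * B * B) +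
    ((1/6912 : ℝ) * h ^ 4) • (B * B * B * A * A * B * B * B) +
    ((1/20736 : ℝ) * h ^ 5) • (A * A * A * B * B * B * A * A * A) +
    ((1/20736 : ℝ) * h ^ 5) • (B * B * B * A * A * A * B * B * B)

lemma bmW_cont (A B : 𝔸) : Continuous fun h : ℝ => bmW h A B := by
  unfold bmW; fun_prop

set_option maxHeartbeats 4000000 in
/-- Key algebraic identity: the Burstein–Mirin combination of the cubic Taylor
polynomials agrees with `exp`'s cubic Taylor polynomial up to `h ^ 4` times an explicit
residual. -/
lemma bm_key (A B : 𝔸) (h : ℝ) :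
    (2 / 3 : ℝ) • (bmP ((h / 2) • B) * bmP (h • A) * bmP ((h / 2) • B) +
        bmP ((h / 2) • A) * bmP (h • B) * bmP ((h / 2) • A)) -
      (1 / 3 : ℝ) • ((1 / 2 : ℝ) • (bmP (h • A) * bmP (h • B) + bmP (h • B) * bmP (h • A))) -
      bmP (h • (A + B)) = h ^ 4 • bmW h A B := by
  simp only [bmP, bmW, smul_add, mul_add, add_mul, smul_mul_assoc, mul_smul_comm,
    smul_smul, mul_assoc, one_mul, mul_one]
  module



lemma fact_ge (i : ℕ) : (24 : ℝ) * 2 ^ i ≤ ((i + 4)! : ℝ) := by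
  induction i with
  | zero => norm_num [Nat.factorial]
  | succ i ih =>
      have h1 : ((i + 4)! : ℝ) * 2 ≤ ((i + 5)! : ℝ) := by
        have : (i + 5)! = (i + 5) * (i + 4)! := rfl
        rw [this]
        push_cast
        nlinarith [Nat.one_le_iff_ne_zero.2 (Nat.factorial_ne_zero (i + 4)),
          (Nat.cast_le (α := ℝ)).2 (Nat.one_le_iff_ne_zero.2 (Nat.factorial_ne_zero (i + 4)))]
      calc (24 : ℝ) * 2 ^ (i + 1) = (24 * 2 ^ i) * 2 := by ring
        _ ≤ ((i + 4)! : ℝ) * 2 := by nlinarith [pow_pos (two_pos (α := ℝ)) i]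
        _ ≤ _ := by exact_mod_cast h1

lemma norm_exp_sub_bmP_le (X : 𝔸) (hX : ‖X‖ ≤ 1) :
    ‖NormedSpace.exp X - bmP X‖ ≤ ‖X‖ ^ 4 := by
  have hs : Summable fun n : ℕ => (n !⁻¹ : ℝ) • X ^ n := NormedSpace.expSeries_summable' X
  have hsplit : NormedSpace.exp X =
      (∑ i ∈ Finset.range 4, (i !⁻¹ : ℝ) • X ^ i) + ∑' i : ℕ, ((i + 4)!⁻¹ : ℝ) • X ^ (i + 4) := by
    rw [NormedSpace.exp_eq_tsum ℝ]
    exact (hs.sum_add_tsum_nat_add 4).symm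
  have hP : (∑ i ∈ Finset.range 4, (i !⁻¹ : ℝ) • X ^ i) = bmP X := by
    norm_num [Finset.sum_range_succ, bmP, Nat.factorial, pow_succ, mul_assoc]
  rw [hsplit, hP, add_sub_cancel_left]
  have hnorms : Summable fun i : ℕ => ‖((i + 4)!⁻¹ : ℝ) • X ^ (i + 4)‖ := by
    exact (summable_nat_add_iff 4).2 (NormedSpace.norm_expSeries_summable' X)
  have hXnn : (0:ℝ) ≤ ‖X‖ := norm_nonneg X
  have hterm : ∀ i : ℕ, ‖((i + 4)!⁻¹ : ℝ) • X ^ (i + 4)‖ ≤ ‖X‖ ^ 4 * ((1/24) * (1/2) ^ i) := by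
    intro i
    have h1 : ‖((i + 4)!⁻¹ : ℝ) • X ^ (i + 4)‖ ≤ (((i + 4)! : ℝ))⁻¹ * ‖X‖ ^ (i + 4) := by
      rw [norm_smul, Real.norm_eq_abs, abs_of_nonneg (by positivity)]
      gcongr
      exact norm_pow_le' X (by omega)
    have h2 : (((i + 4)! : ℝ))⁻¹ ≤ (1/24) * (1/2) ^ i := by
      have heq : ((1:ℝ)/24) * (1/2) ^ i = ((24:ℝ) * 2 ^ i)⁻¹ := by
        rw [mul_inv, div_pow, one_pow]
        norm_num
      rw [heq]
      exact inv_anti₀ (by positivity) (fact_ge i)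
    have h3 : ‖X‖ ^ (i + 4) ≤ ‖X‖ ^ 4 := by
      calc ‖X‖ ^ (i + 4) = ‖X‖ ^ i * ‖X‖ ^ 4 := by ring
        _ ≤ 1 * ‖X‖ ^ 4 := by
            gcongr
            exact pow_le_one₀ hXnn hX
        _ = ‖X‖ ^ 4 := one_mul _
    calc ‖((i + 4)!⁻¹ : ℝ) • X ^ (i + 4)‖ ≤ (((i + 4)! : ℝ))⁻¹ * ‖X‖ ^ (i + 4) := h1
      _ ≤ ((1/24) * (1/2) ^ i) * ‖X‖ ^ 4 := by
          apply mul_le_mul h2 h3 (by positivity) (by positivity)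
      _ = ‖X‖ ^ 4 * ((1/24) * (1/2) ^ i) := by ring
  have hgeo : Summable fun i : ℕ => ‖X‖ ^ 4 * ((1/24 : ℝ) * (1/2) ^ i) := by
    exact (((summable_geometric_of_lt_one (by norm_num) (by norm_num)).mul_left _).mul_left _)
  calc ‖∑' i : ℕ, ((i + 4)!⁻¹ : ℝ) • X ^ (i + 4)‖
      ≤ ∑' i : ℕ, ‖((i + 4)!⁻¹ : ℝ) • X ^ (i + 4)‖ := norm_tsum_le_tsum_norm hnorms
    _ ≤ ∑' i : ℕ, ‖X‖ ^ 4 * ((1/24 : ℝ) * (1/2) ^ i) := Summable.tsum_le_tsum hterm hnorms hgeo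
    _ = ‖X‖ ^ 4 * ((1/24) * (1 - 1/2)⁻¹) := by
        rw [tsum_mul_left, tsum_mul_left, tsum_geometric_of_lt_one (by norm_num) (by norm_num)]
    _ ≤ ‖X‖ ^ 4 * 1 := by gcongr <;> norm_num
    _ = ‖X‖ ^ 4 := mul_one _



/-- `f` is `O(h⁴)` near `0`. -/
def bmSm (f : ℝ → 𝔸) : Prop :=
  ∃ C δ : ℝ, 0 < C ∧ 0 < δ ∧ δ ≤ 1 ∧ ∀ h : ℝ, |h| ≤ δ → ‖f h‖ ≤ C * |h| ^ 4

lemma bmSm.congr {f g : ℝ → 𝔸} (hf : bmSm f) (hfg : ∀ x, f x = g x) : bmSm g := by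
  obtain ⟨C, δ, hC, hδ, hδ1, hb⟩ := hf
  exact ⟨C, δ, hC, hδ, hδ1, fun h hh => (hfg h) ▸ hb h hh⟩

lemma bmSm.add {f g : ℝ → 𝔸} (hf : bmSm f) (hg : bmSm g) : bmSm fun h => f h + g h := by
  obtain ⟨C1, δ1, hC1, hδ1, hd1, hb1⟩ := hf
  obtain ⟨C2, δ2, hC2, hδ2, hd2, hb2⟩ := hg
  refine ⟨C1 + C2, min δ1 δ2, by positivity, lt_min hδ1 hδ2, le_trans (min_le_left _ _) hd1, ?_⟩
  intro h hh
  calc ‖f h + g h‖ ≤ ‖f h‖ + ‖g h‖ := norm_add_le _ _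
    _ ≤ C1 * |h| ^ 4 + C2 * |h| ^ 4 :=
        add_le_add (hb1 h (le_trans hh (min_le_left _ _))) (hb2 h (le_trans hh (min_le_right _ _)))
    _ = (C1 + C2) * |h| ^ 4 := by ring

lemma bmSm.smul {f : ℝ → 𝔸} (hf : bmSm f) (c : ℝ) : bmSm fun h => c • f h := by
  obtain ⟨C, δ, hC, hδ, hδ1, hb⟩ := hf
  refine ⟨(|c| + 1) * C, δ, by positivity, hδ, hδ1, ?_⟩
  intro h hh
  rw [norm_smul, Real.norm_eq_abs]
  calc |c| * ‖f h‖ ≤ (|c| + 1) * (C * |h| ^ 4) := by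
        apply mul_le_mul (by linarith [abs_nonneg c]) (hb h hh) (norm_nonneg _) (by positivity)
    _ = (|c| + 1) * C * |h| ^ 4 := by ring

lemma bmSm.neg {f : ℝ → 𝔸} (hf : bmSm f) : bmSm fun h => -f h := by
  obtain ⟨C, δ, hC, hδ, hδ1, hb⟩ := hf
  exact ⟨C, δ, hC, hδ, hδ1, fun h hh => by rw [norm_neg]; exact hb h hh⟩

lemma bmSm.sub {f g : ℝ → 𝔸} (hf : bmSm f) (hg : bmSm g) : bmSm fun h => f h - g h :=
  (hf.add hg.neg).congr fun x => (sub_eq_add_neg _ _).symm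

lemma bmBound (f : ℝ → 𝔸) (hf : Continuous f) :
    ∃ C : ℝ, 0 < C ∧ ∀ h : ℝ, |h| ≤ 1 → ‖f h‖ ≤ C := by
  obtain ⟨C, hC⟩ :=
    (isCompact_Icc : IsCompact (Set.Icc (-1 : ℝ) 1)).exists_bound_of_continuousOn
      hf.continuousOn
  refine ⟨max C 1, lt_of_lt_of_le one_pos (le_max_right _ _), fun h hh => ?_⟩
  exact le_trans (hC h (by rw [Set.mem_Icc]; exact abs_le.1 hh)) (le_max_left _ _)

lemma bmSm.mul_cont {f g : ℝ → 𝔸} (hf : bmSm f) (hg : Continuous g) :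
    bmSm fun h => f h * g h := by
  obtain ⟨C, δ, hC, hδ, hδ1, hb⟩ := hf
  obtain ⟨D, hD, hbD⟩ := bmBound g hg
  refine ⟨C * D, δ, by positivity, hδ, hδ1, ?_⟩
  intro h hh
  calc ‖f h * g h‖ ≤ ‖f h‖ * ‖g h‖ := norm_mul_le _ _
    _ ≤ (C * |h| ^ 4) * D :=
        mul_le_mul (hb h hh) (hbD h (le_trans hh hδ1)) (norm_nonneg _) (by positivity)
    _ = C * D * |h| ^ 4 := by ring

lemma bmSm.cont_mul {f g : ℝ → 𝔸} (hf : Continuous f) (hg : bmSm g) :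
    bmSm fun h => f h * g h := by
  obtain ⟨C, δ, hC, hδ, hδ1, hb⟩ := hg
  obtain ⟨D, hD, hbD⟩ := bmBound f hf
  refine ⟨D * C, δ, by positivity, hδ, hδ1, ?_⟩
  intro h hh
  calc ‖f h * g h‖ ≤ ‖f h‖ * ‖g h‖ := norm_mul_le _ _
    _ ≤ D * (C * |h| ^ 4) :=
        mul_le_mul (hbD h (le_trans hh hδ1)) (hb h hh) (norm_nonneg _) (le_of_lt hD)
    _ = D * C * |h| ^ 4 := by ring

lemma bmCont_exp (X : 𝔸) : Continuous fun h : ℝ => NormedSpace.exp (h • X) :=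
  letI : NormedAlgebra ℚ 𝔸 := NormedAlgebra.restrictScalars ℚ ℝ 𝔸
  NormedSpace.exp_continuous.comp (continuous_id.smul continuous_const)

lemma bmCont_P (X : 𝔸) : Continuous fun h : ℝ => bmP (h • X) := by
  unfold bmP; fun_prop

lemma bmSm_exp_sub_P (X : 𝔸) :
    bmSm fun h => NormedSpace.exp (h • X) - bmP (h • X) := by
  refine ⟨(‖X‖ + 1) ^ 4, min 1 (1 / (‖X‖ + 1)), by positivity, ?_, min_le_left _ _, ?_⟩
  · apply lt_min one_pos
    positivity
  intro h hh
  have hXpos : (0 : ℝ) < ‖X‖ + 1 := by positivity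
  have hX1 : ‖h • X‖ ≤ 1 := by
    rw [norm_smul, Real.norm_eq_abs]
    have h2 : |h| ≤ 1 / (‖X‖ + 1) := le_trans hh (min_le_right _ _)
    calc |h| * ‖X‖ ≤ (1 / (‖X‖ + 1)) * (‖X‖ + 1) :=
          mul_le_mul h2 (by linarith) (norm_nonneg _) (by positivity)
      _ = 1 := by field_simp
  calc ‖NormedSpace.exp (h • X) - bmP (h • X)‖ ≤ ‖h • X‖ ^ 4 :=
        norm_exp_sub_bmP_le _ hX1
    _ = |h| ^ 4 * ‖X‖ ^ 4 := by rw [norm_smul, Real.norm_eq_abs, mul_pow]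
    _ ≤ |h| ^ 4 * (‖X‖ + 1) ^ 4 := by gcongr; linarith
    _ = (‖X‖ + 1) ^ 4 * |h| ^ 4 := by ring

lemma bmSm_three (X Y Z : 𝔸) :
    bmSm fun h => NormedSpace.exp (h • X) * NormedSpace.exp (h • Y) *
        NormedSpace.exp (h • Z) - bmP (h • X) * bmP (h • Y) * bmP (h • Z) := by
  have t1 := (bmSm_exp_sub_P X).mul_cont ((bmCont_exp Y).mul (bmCont_exp Z))
  have t2 := bmSm.cont_mul (bmCont_P X) ((bmSm_exp_sub_P Y).mul_cont (bmCont_exp Z))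
  have t3 := bmSm.cont_mul ((bmCont_P X).mul (bmCont_P Y)) (bmSm_exp_sub_P Z)
  refine ((t1.add t2).add t3).congr fun x => ?_
  simp only [Pi.mul_apply]
  noncomm_ring

lemma bmSm_two (X Y : 𝔸) :
    bmSm fun h => NormedSpace.exp (h • X) * NormedSpace.exp (h • Y) -
      bmP (h • X) * bmP (h • Y) := by
  have t1 := (bmSm_exp_sub_P X).mul_cont (bmCont_exp Y)
  have t2 := bmSm.cont_mul (bmCont_P X) (bmSm_exp_sub_P Y)
  refine (t1.add t2).congr fun x => ?_
  noncomm_ring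


/-- The Burstein–Mirin combination
`D h = (2/3)(S_AB h + S_BA h) - (1/3) S h` is a third-order approximation:
`D h = e^{h(A+B)} + O(h⁴)`. -/
theorem burstein_mirin_third_order (n : ℕ)
    (A B : Matrix (Fin n) (Fin n) ℝ) :
    ∃ C δ : ℝ, 0 < C ∧ 0 < δ ∧ ∀ h : ℝ, |h| ≤ δ →
      ‖(2 / 3 : ℝ) • (NormedSpace.exp ((h / 2) • B) * NormedSpace.exp (h • A) *
            NormedSpace.exp ((h / 2) • B) +
          NormedSpace.exp ((h / 2) • A) * NormedSpace.exp (h • B) *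
            NormedSpace.exp ((h / 2) • A)) -
        (1 / 3 : ℝ) • ((1 / 2 : ℝ) • (NormedSpace.exp (h • A) * NormedSpace.exp (h • B) +
          NormedSpace.exp (h • B) * NormedSpace.exp (h • A))) -
        NormedSpace.exp (h • (A + B))‖ ≤ C * |h| ^ 4 := by
  have hA2 : ∀ h : ℝ, h • ((1/2 : ℝ) • A) = (h / 2) • A := by
    intro h; rw [smul_smul]; congr 1; ring
  have hB2 : ∀ h : ℝ, h • ((1/2 : ℝ) • B) = (h / 2) • B := by
    intro h; rw [smul_smul]; congr 1; ring
  have hW : bmSm fun h : ℝ => h ^ 4 • bmW h A B := by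
    obtain ⟨C, hC, hb⟩ := bmBound _ (bmW_cont A B)
    refine ⟨C, 1, hC, one_pos, le_refl _, fun h hh => ?_⟩
    rw [norm_smul, Real.norm_eq_abs, abs_pow]
    calc |h| ^ 4 * ‖bmW h A B‖ ≤ |h| ^ 4 * C := by
          gcongr
          exact hb h hh
      _ = C * |h| ^ 4 := by ring
  have T :=
    (((((bmSm_three ((1/2 : ℝ) • B) A ((1/2 : ℝ) • B)).add
        (bmSm_three ((1/2 : ℝ) • A) B ((1/2 : ℝ) • A))).smul (2/3)).sub
      ((((bmSm_two A B).add (bmSm_two B A)).smul (1/2)).smul (1/3))).sub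
        (bmSm_exp_sub_P (A + B))).add hW
  have T2 := T.congr (g := fun h : ℝ =>
      (2 / 3 : ℝ) • (NormedSpace.exp ((h / 2) • B) * NormedSpace.exp (h • A) *
            NormedSpace.exp ((h / 2) • B) +
          NormedSpace.exp ((h / 2) • A) * NormedSpace.exp (h • B) *
            NormedSpace.exp ((h / 2) • A)) -
        (1 / 3 : ℝ) • ((1 / 2 : ℝ) • (NormedSpace.exp (h • A) * NormedSpace.exp (h • B) +
          NormedSpace.exp (h • B) * NormedSpace.exp (h • A))) -
        NormedSpace.exp (h • (A + B))) ?_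
  · obtain ⟨C, δ, hC, hδ, _, hb⟩ := T2
    exact ⟨C, δ, hC, hδ, hb⟩
  · intro x
    rw [hB2 x, hA2 x, ← bm_key A B x]
    simp only [smul_sub, smul_add]; abel

end BM
end

section
/- For n×n matrices A and B, the fourth-order multi-product expansion T₄(h) = -⅓T₂(h) + (4/3)T₂(h/2)² with T₂(h) = e^{(h/2)B}e^{hA}e^{(h/2)B} satisfies T₄(h) = e^{h(A+B)} + O(h⁵). -/
open Finset

set_option linter.unusedSectionVars false
set_option maxHeartbeats 1000000
section Aux
variable {𝔸 : Type*} [NormedRing 𝔸] [NormedAlgebra ℝ 𝔸] [CompleteSpace 𝔸]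

/-- evaluation of a polynomial with coefficients `c` at `h` -/
noncomputable def pev (c : ℕ → 𝔸) (N : ℕ) (h : ℝ) : 𝔸 := ∑ k ∈ Finset.range N, h ^ k • c k

lemma pev_continuous (c : ℕ → 𝔸) (N : ℕ) : Continuous (pev c N) := by
  unfold pev
  exact continuous_finset_sum _ fun k _ => (continuous_pow k).smul continuous_const

/-- degree-4 truncation of `exp(t • M)` -/
noncomputable def trunc (M : 𝔸) (t : ℝ) : 𝔸 := pev (fun k => ((Nat.factorial k : ℝ))⁻¹ • M ^ k) 5 t

lemma trunc_continuous (M : 𝔸) : Continuous (fun t => trunc M t) := by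
  unfold trunc; exact pev_continuous _ 5

lemma bound_on_unit (f : ℝ → 𝔸) (hf : Continuous f) :
    ∃ c : ℝ, 0 ≤ c ∧ ∀ t : ℝ, |t| ≤ 1 → ‖f t‖ ≤ c := by
  obtain ⟨c, hc⟩ := (isCompact_Icc (a := (-1:ℝ)) (b := 1)).exists_bound_of_continuousOn
    (hf.norm.continuousOn)
  refine ⟨max c 0, le_max_right _ _, fun t ht => ?_⟩
  have := hc t (abs_le.mp ht |> fun h => ⟨h.1, h.2⟩)
  calc ‖f t‖ ≤ c := by simpa using this
    _ ≤ max c 0 := le_max_left _ _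

lemma exp_sub_trunc (M : 𝔸) (t : ℝ) (ht : |t| ≤ 1) :
    ‖NormedSpace.exp (t • M) - trunc M t‖ ≤ Real.exp ‖M‖ * |t| ^ 5 := by
  set f : ℕ → 𝔸 := fun k => ((Nat.factorial k : ℝ))⁻¹ • (t • M) ^ k with hf
  have hs : Summable f := NormedSpace.expSeries_summable' (𝕂 := ℝ) (t • M)
  have hsn : Summable fun k => ‖f k‖ := NormedSpace.norm_expSeries_summable' (𝕂 := ℝ) (t • M)
  have hexp : NormedSpace.exp (t • M) = ∑' k, f k := by
    rw [NormedSpace.exp_eq_tsum ℝ]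
  have htr : trunc M t = ∑ k ∈ Finset.range 5, f k := by
    unfold trunc pev
    refine Finset.sum_congr rfl fun k _ => ?_
    rw [hf]
    simp [smul_pow, smul_smul, mul_comm]
  have hkey : NormedSpace.exp (t • M) - trunc M t = ∑' k, f (k + 5) := by
    rw [hexp, htr, ← Summable.sum_add_tsum_nat_add 5 hs]
    abel
  rw [hkey]
  have hnorm : ∀ k : ℕ, ‖f (k + 5)‖ ≤ ((Nat.factorial (k + 5) : ℝ))⁻¹ * ‖M‖ ^ (k + 5) * |t| ^ 5 := by
    intro k
    rw [hf]
    simp only [smul_pow, smul_smul, norm_smul]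
    have h1 : ‖M ^ (k+5)‖ ≤ ‖M‖ ^ (k+5) := norm_pow_le' M (by omega)
    have h2 : |t ^ (k+5)| ≤ |t| ^ 5 := by
      rw [abs_pow]
      exact pow_le_pow_of_le_one (abs_nonneg t) ht (by omega)
    have h3 : (0:ℝ) ≤ ((Nat.factorial (k + 5) : ℝ))⁻¹ := by positivity
    have h4 : ‖((Nat.factorial (k+5) : ℝ))⁻¹ * t ^ (k+5)‖
        ≤ ((Nat.factorial (k+5) : ℝ))⁻¹ * |t| ^ 5 := by
      rw [Real.norm_eq_abs, abs_mul, abs_of_nonneg h3]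
      exact mul_le_mul_of_nonneg_left h2 h3
    calc ‖((Nat.factorial (k+5) : ℝ))⁻¹ * t ^ (k+5)‖ * ‖M ^ (k+5)‖
        ≤ (((Nat.factorial (k+5) : ℝ))⁻¹ * |t| ^ 5) * ‖M‖ ^ (k+5) :=
          mul_le_mul h4 h1 (norm_nonneg _) (by positivity)
      _ = ((Nat.factorial (k+5) : ℝ))⁻¹ * ‖M‖ ^ (k+5) * |t| ^ 5 := by ring
  have hg : Summable fun k : ℕ => ((Nat.factorial k : ℝ))⁻¹ * ‖M‖ ^ k := by
    simpa [smul_eq_mul] using NormedSpace.expSeries_summable' (𝕂 := ℝ) (‖M‖ : ℝ)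
  have hg5 : Summable fun k : ℕ => ((Nat.factorial (k + 5) : ℝ))⁻¹ * ‖M‖ ^ (k + 5) :=
    (summable_nat_add_iff 5).mpr hg
  calc ‖∑' k, f (k + 5)‖ ≤ ∑' k, ‖f (k + 5)‖ :=
        norm_tsum_le_tsum_norm ((summable_nat_add_iff 5).mpr hsn)
    _ ≤ ∑' k, ((Nat.factorial (k + 5) : ℝ))⁻¹ * ‖M‖ ^ (k + 5) * |t| ^ 5 :=
        Summable.tsum_le_tsum hnorm ((summable_nat_add_iff 5).mpr hsn) (hg5.mul_right _)
    _ = (∑' k, ((Nat.factorial (k + 5) : ℝ))⁻¹ * ‖M‖ ^ (k + 5)) * |t| ^ 5 := tsum_mul_right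
    _ ≤ Real.exp ‖M‖ * |t| ^ 5 := by
        apply mul_le_mul_of_nonneg_right _ (by positivity)
        have hexpM : Real.exp ‖M‖ = ∑' k : ℕ, ((Nat.factorial k : ℝ))⁻¹ * ‖M‖ ^ k := by
          rw [Real.exp_eq_exp_ℝ, NormedSpace.exp_eq_tsum ℝ]
          simp [smul_eq_mul]
        have hsplit := Summable.sum_add_tsum_nat_add
          (f := fun k : ℕ => ((Nat.factorial k : ℝ))⁻¹ * ‖M‖ ^ k) 5 hg
        rw [hexpM, ← hsplit]
        have hpos : 0 ≤ ∑ k ∈ Finset.range 5, ((Nat.factorial k : ℝ))⁻¹ * ‖M‖ ^ k :=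
          Finset.sum_nonneg fun k _ => by positivity
        linarith

noncomputable def Cf (A B : 𝔸) : ℕ → 𝔸
  | 0 => (1:ℝ) • (1:𝔸)
  | 1 => (1:ℝ) • (A) + (1:ℝ) • (B)
  | 2 => ((1:ℝ)/2) • (A * (A)) + ((1:ℝ)/2) • (A * (B)) + ((1:ℝ)/2) • (B * (A)) + ((1:ℝ)/2) • (B * (B))
  | 3 => ((1:ℝ)/6) • (A * (A * (A))) + ((1:ℝ)/4) • (A * (A * (B))) + ((1:ℝ)/8) • (A * (B * (B))) + ((1:ℝ)/4) • (B * (A * (A))) + ((1:ℝ)/4) • (B * (A * (B))) + ((1:ℝ)/8) • (B * (B * (A))) + ((1:ℝ)/6) • (B * (B * (B)))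
  | 4 => ((1:ℝ)/24) • (A * (A * (A * (A)))) + ((1:ℝ)/12) • (A * (A * (A * (B)))) + ((1:ℝ)/16) • (A * (A * (B * (B)))) + ((1:ℝ)/48) • (A * (B * (B * (B)))) + ((1:ℝ)/12) • (B * (A * (A * (A)))) + ((1:ℝ)/8) • (B * (A * (A * (B)))) + ((1:ℝ)/16) • (B * (A * (B * (B)))) + ((1:ℝ)/16) • (B * (B * (A * (A)))) + ((1:ℝ)/16) • (B * (B * (A * (B)))) + ((1:ℝ)/48) • (B * (B * (B * (A)))) + ((1:ℝ)/24) • (B * (B * (B * (B))))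
  | _ => 0

noncomputable def Gf (A B : 𝔸) : ℕ → 𝔸
  | 0 => ((1:ℝ)/48) • (A * (A * (A * (A * (B))))) + ((1:ℝ)/48) • (A * (A * (A * (B * (B))))) + ((1:ℝ)/96) • (A * (A * (B * (B * (B))))) + ((1:ℝ)/384) • (A * (B * (B * (B * (B))))) + ((1:ℝ)/48) • (B * (A * (A * (A * (A))))) + ((1:ℝ)/24) • (B * (A * (A * (A * (B))))) + ((1:ℝ)/32) • (B * (A * (A * (B * (B))))) + ((1:ℝ)/96) • (B * (A * (B * (B * (B))))) + ((1:ℝ)/48) • (B * (B * (A * (A * (A))))) + ((1:ℝ)/32) • (B * (B * (A * (A * (B))))) + ((1:ℝ)/64) • (B * (B * (A * (B * (B))))) + ((1:ℝ)/96) • (B * (B * (B * (A * (A))))) + ((1:ℝ)/96) • (B * (B * (B * (A * (B))))) + ((1:ℝ)/384) • (B * (B * (B * (B * (A))))) + ((1:ℝ)/128) • (B * (B * (B * (B * (B)))))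
  | 1 => ((1:ℝ)/192) • (A * (A * (A * (A * (B * (B)))))) + ((1:ℝ)/288) • (A * (A * (A * (B * (B * (B)))))) + ((1:ℝ)/768) • (A * (A * (B * (B * (B * (B)))))) + ((1:ℝ)/96) • (B * (A * (A * (A * (A * (B)))))) + ((1:ℝ)/96) • (B * (A * (A * (A * (B * (B)))))) + ((1:ℝ)/192) • (B * (A * (A * (B * (B * (B)))))) + ((1:ℝ)/768) • (B * (A * (B * (B * (B * (B)))))) + ((1:ℝ)/192) • (B * (B * (A * (A * (A * (A)))))) + ((1:ℝ)/96) • (B * (B * (A * (A * (A * (B)))))) + ((1:ℝ)/128) • (B * (B * (A * (A * (B * (B)))))) + ((1:ℝ)/384) • (B * (B * (A * (B * (B * (B)))))) + ((1:ℝ)/288) • (B * (B * (B * (A * (A * (A)))))) + ((1:ℝ)/192) • (B * (B * (B * (A * (A * (B)))))) + ((1:ℝ)/384) • (B * (B * (B * (A * (B * (B)))))) + ((1:ℝ)/768) • (B * (B * (B * (B * (A * (A)))))) + ((1:ℝ)/768) • (B * (B * (B * (B * (A * (B)))))) + ((5:ℝ)/4608) • (B * (B * (B * (B * (B * (B)))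)))
  | 2 => ((1:ℝ)/1152) • (A * (A * (A * (A * (B * (B * (B))))))) + ((1:ℝ)/2304) • (A * (A * (A * (B * (B * (B * (B))))))) + ((1:ℝ)/384) • (B * (A * (A * (A * (A * (B * (B))))))) + ((1:ℝ)/576) • (B * (A * (A * (A * (B * (B * (B))))))) + ((1:ℝ)/1536) • (B * (A * (A * (B * (B * (B * (B))))))) + ((1:ℝ)/384) • (B * (B * (A * (A * (A * (A * (B))))))) + ((1:ℝ)/384) • (B * (B * (A * (A * (A * (B * (B))))))) + ((1:ℝ)/768) • (B * (B * (A * (A * (B * (B * (B))))))) + ((1:ℝ)/3072) • (B * (B * (A * (B * (B * (B * (B))))))) + ((1:ℝ)/1152) • (B * (B * (B * (A * (A * (A * (A))))))) + ((1:ℝ)/576) • (B * (B * (B * (A * (A * (A * (B))))))) + ((1:ℝ)/768) • (B * (B * (B * (A * (A * (B * (B))))))) + ((1:ℝ)/2304) • (B * (B * (B * (A * (B * (B * (B))))))) + ((1:ℝ)/2304) • (B * (B * (B * (B * (A * (A * (A))))))) + ((1:ℝ)/1536) • (B * (B * (B * (B * (A * (A * (B))))))) + ((1:ℝ)/3072)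 • (B * (B * (B * (B * (A * (B * (B))))))) + ((1:ℝ)/9216) • (B * (B * (B * (B * (B * (B * (B)))))))
  | 3 => ((1:ℝ)/9216) • (A * (A * (A * (A * (B * (B * (B * (B)))))))) + ((1:ℝ)/2304) • (B * (A * (A * (A * (A * (B * (B * (B)))))))) + ((1:ℝ)/4608) • (B * (A * (A * (A * (B * (B * (B * (B)))))))) + ((1:ℝ)/1536) • (B * (B * (A * (A * (A * (A * (B * (B)))))))) + ((1:ℝ)/2304) • (B * (B * (A * (A * (A * (B * (B * (B)))))))) + ((1:ℝ)/6144) • (B * (B * (A * (A * (B * (B * (B * (B)))))))) + ((1:ℝ)/2304) • (B * (B * (B * (A * (A * (A * (A * (B)))))))) + ((1:ℝ)/2304) • (B * (B * (B * (A * (A * (A * (B * (B)))))))) + ((1:ℝ)/4608) • (B * (B * (B * (A * (A * (B * (B * (B)))))))) + ((1:ℝ)/18432) • (B * (B * (B * (A * (B * (B * (B * (B)))))))) + ((1:ℝ)/9216) • (B * (B * (B * (B * (A * (A * (A * (A)))))))) + ((1:ℝ)/4608) • (B * (B * (B * (B * (A * (A * (A * (B)))))))) + ((1:ℝ)/6144)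 • (B * (B * (B * (B * (A * (A * (B * (B)))))))) + ((1:ℝ)/18432) • (B * (B * (B * (B * (A * (B * (B * (B)))))))) + ((1:ℝ)/147456) • (B * (B * (B * (B * (B * (B * (B * (B))))))))
  | 4 => ((1:ℝ)/18432) • (B * (A * (A * (A * (A * (B * (B * (B * (B))))))))) + ((1:ℝ)/9216) • (B * (B * (A * (A * (A * (A * (B * (B * (B))))))))) + ((1:ℝ)/18432) • (B * (B * (A * (A * (A * (B * (B * (B * (B))))))))) + ((1:ℝ)/9216) • (B * (B * (B * (A * (A * (A * (A * (B * (B))))))))) + ((1:ℝ)/13824) • (B * (B * (B * (A * (A * (A * (B * (B * (B))))))))) + ((1:ℝ)/36864) • (B * (B * (B * (A * (A * (B * (B * (B * (B))))))))) + ((1:ℝ)/18432) • (B * (B * (B * (B * (A * (A * (A * (A * (B))))))))) + ((1:ℝ)/18432) • (B * (B * (B * (B * (A * (A * (A * (B * (B))))))))) + ((1:ℝ)/36864) • (B * (B * (B * (B * (A * (A * (B * (B * (B))))))))) + ((1:ℝ)/147456) • (B * (B * (B * (B * (A * (B * (B * (B * (B)))))))))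
  | 5 => ((1:ℝ)/73728) • (B * (B * (A * (A * (A * (A * (B * (B * (B * (B)))))))))) + ((1:ℝ)/55296) • (B * (B * (B * (A * (A * (A * (A * (B * (B * (B)))))))))) + ((1:ℝ)/110592) • (B * (B * (B * (A * (A * (A * (B * (B * (B * (B)))))))))) + ((1:ℝ)/73728) • (B * (B * (B * (B * (A * (A * (A * (A * (B * (B)))))))))) + ((1:ℝ)/110592) • (B * (B * (B * (B * (A * (A * (A * (B * (B * (B)))))))))) + ((1:ℝ)/294912) • (B * (B * (B * (B * (A * (A * (B * (B * (B * (B))))))))))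
  | 6 => ((1:ℝ)/442368) • (B * (B * (B * (A * (A * (A * (A * (B * (B * (B * (B))))))))))) + ((1:ℝ)/442368) • (B * (B * (B * (B * (A * (A * (A * (A * (B * (B * (B))))))))))) + ((1:ℝ)/884736) • (B * (B * (B * (B * (A * (A * (A * (B * (B * (B * (B)))))))))))
  | 7 => ((1:ℝ)/3538944) • (B * (B * (B * (B * (A * (A * (A * (A * (B * (B * (B * (B))))))))))))
  | _ => 0

noncomputable def G2f (A B : 𝔸) : ℕ → 𝔸
  | 0 => (((4:ℝ)/3) * ((1:ℝ)/32)) • (Cf A B 1 * Cf A B 4 + Cf A B 2 * Cf A B 3 + Cf A B 3 * Cf A B 2 + Cf A B 4 * Cf A B 1)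
  | 1 => (((4:ℝ)/3) * ((1:ℝ)/64)) • (Cf A B 2 * Cf A B 4 + Cf A B 3 * Cf A B 3 + Cf A B 4 * Cf A B 2)
  | 2 => (((4:ℝ)/3) * ((1:ℝ)/128)) • (Cf A B 3 * Cf A B 4 + Cf A B 4 * Cf A B 3)
  | 3 => (((4:ℝ)/3) * ((1:ℝ)/256)) • (Cf A B 4 * Cf A B 4)
  | _ => 0

lemma trunc_eq (M : 𝔸) (t : ℝ) : trunc M t =
    1 + t • M + (t^2/2) • (M * M) + (t^3/6) • (M * (M * M)) + (t^4/24) • (M * (M * (M * M))) := by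
  simp only [trunc, pev, Finset.sum_range_succ, Finset.sum_range_zero, Nat.factorial]
  norm_num
  simp only [pow_succ, pow_zero, one_mul, mul_assoc]
  module

lemma ident1 (A B : 𝔸) (h : ℝ) :
    trunc B (h/2) * (trunc A h * trunc B (h/2)) = pev (Cf A B) 5 h + h^5 • pev (Gf A B) 8 h := by
  simp only [trunc_eq, pev, Finset.sum_range_succ, Finset.sum_range_zero, zero_add, Cf, Gf]
  simp only [pow_zero, pow_one, one_smul, mul_add, add_mul, smul_add, smul_mul_assoc,
    mul_smul_comm, smul_smul, mul_one, one_mul, mul_assoc]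
  module

lemma br0 (A B : 𝔸) : (-(1 / 3 : ℝ)) • Cf A B 0 + ((4 / 3 : ℝ) * ((1:ℝ)/1)) • (Cf A B 0 * Cf A B 0) - ((Nat.factorial 0 : ℝ))⁻¹ • ((A + B) ^ 0) = 0 := by
  simp only [Cf]
  norm_num [Nat.factorial]
  module

lemma br1 (A B : 𝔸) : (-(1 / 3 : ℝ)) • Cf A B 1 + ((4 / 3 : ℝ) * ((1:ℝ)/2)) • (Cf A B 0 * Cf A B 1 + Cf A B 1 * Cf A B 0) - ((Nat.factorial 1 : ℝ))⁻¹ • ((A + B) ^ 1) = 0 := by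
  simp only [Cf]
  norm_num [Nat.factorial]
  module

lemma br2 (A B : 𝔸) : (-(1 / 3 : ℝ)) • Cf A B 2 + ((4 / 3 : ℝ) * ((1:ℝ)/4)) • (Cf A B 0 * Cf A B 2 + Cf A B 1 * Cf A B 1 + Cf A B 2 * Cf A B 0) - ((Nat.factorial 2 : ℝ))⁻¹ • ((A + B) ^ 2) = 0 := by
  simp only [Cf]
  norm_num [Nat.factorial]
  simp only [pow_succ, pow_zero, one_mul, mul_one, mul_add, add_mul, smul_add,
    smul_mul_assoc, mul_smul_comm, smul_smul, one_smul, mul_assoc]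
  module

lemma br3 (A B : 𝔸) : (-(1 / 3 : ℝ)) • Cf A B 3 + ((4 / 3 : ℝ) * ((1:ℝ)/8)) • (Cf A B 0 * Cf A B 3 + Cf A B 1 * Cf A B 2 + Cf A B 2 * Cf A B 1 + Cf A B 3 * Cf A B 0) - ((Nat.factorial 3 : ℝ))⁻¹ • ((A + B) ^ 3) = 0 := by
  simp only [Cf]
  norm_num [Nat.factorial]
  simp only [pow_succ, pow_zero, one_mul, mul_one, mul_add, add_mul, smul_add,
    smul_mul_assoc, mul_smul_comm, smul_smul, one_smul, mul_assoc]
  module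

lemma br4 (A B : 𝔸) : (-(1 / 3 : ℝ)) • Cf A B 4 + ((4 / 3 : ℝ) * ((1:ℝ)/16)) • (Cf A B 0 * Cf A B 4 + Cf A B 1 * Cf A B 3 + Cf A B 2 * Cf A B 2 + Cf A B 3 * Cf A B 1 + Cf A B 4 * Cf A B 0) - ((Nat.factorial 4 : ℝ))⁻¹ • ((A + B) ^ 4) = 0 := by
  simp only [Cf]
  norm_num [Nat.factorial]
  simp only [pow_succ, pow_zero, one_mul, mul_one, mul_add, add_mul, smul_add,
    smul_mul_assoc, mul_smul_comm, smul_smul, one_smul, mul_assoc]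
  module

lemma ident2 (A B : 𝔸) (h : ℝ) :
    (-(1 / 3 : ℝ)) • pev (Cf A B) 5 h + (4 / 3 : ℝ) • (pev (Cf A B) 5 (h/2) * pev (Cf A B) 5 (h/2))
      - trunc (A + B) h = h ^ 5 • pev (G2f A B) 4 h := by
  have expand : (-(1 / 3 : ℝ)) • pev (Cf A B) 5 h + (4 / 3 : ℝ) • (pev (Cf A B) 5 (h/2) * pev (Cf A B) 5 (h/2))
      - trunc (A + B) h
      = h ^ 0 • ((-(1 / 3 : ℝ)) • Cf A B 0 + ((4 / 3 : ℝ) * ((1:ℝ)/1)) • (Cf A B 0 * Cf A B 0) - ((Nat.factorial 0 : ℝ))⁻¹ • ((A + B) ^ 0)) + h ^ 1 • ((-(1 / 3 : ℝ)) • Cf A B 1 + ((4 / 3 : ℝ) * ((1:ℝ)/2)) • (Cf A B 0 * Cf A B 1 + Cf A B 1 * Cf A B 0) - ((Nat.factorial 1 : ℝ))⁻¹ • ((A + B) ^ 1)) + h ^ 2 • ((-(1 / 3 : ℝ)) • Cf A B 2 + ((4 / 3 : ℝ) * ((1:ℝ)/4)) • (Cf A B 0 * Cf A B 2 + Cf A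 B 1 * Cf A B 1 + Cf A B 2 * Cf A B 0) - ((Nat.factorial 2 : ℝ))⁻¹ • ((A + B) ^ 2)) + h ^ 3 • ((-(1 / 3 : ℝ)) • Cf A B 3 + ((4 / 3 : ℝ) * ((1:ℝ)/8)) • (Cf A B 0 * Cf A B 3 + Cf A B 1 * Cf A B 2 + Cf A B 2 * Cf A B 1 + Cf A B 3 * Cf A B 0) - ((Nat.factorial 3 : ℝ))⁻¹ • ((A + B) ^ 3)) + h ^ 4 • ((-(1 / 3 : ℝ)) • Cf A B 4 + ((4 / 3 : ℝ) * ((1:ℝ)/16)) • (Cf A B 0 * Cf A B 4 + Cf A B 1 * Cf A B 3 + Cf A B 2 * Cf A B 2 + Cf A B 3 * Cf A B 1 + Cf A B 4 * Cf A B 0) - ((Nat.factorial 4 : ℝ))⁻¹ • ((A + B) ^ 4)) + h ^ 5 • pev (G2f A B) 4 h := by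
    simp only [trunc, pev, Finset.sum_range_succ, Finset.sum_range_zero, zero_add, G2f]
    simp only [mul_add, add_mul, smul_add, smul_mul_assoc, mul_smul_comm, smul_smul]
    module
  rw [expand, br0, br1, br2, br3, br4]
  simp
lemma bnd2 {x y : 𝔸} {a b : ℝ} (hx : ‖x‖ ≤ a) (hy : ‖y‖ ≤ b) : ‖x * y‖ ≤ a * b :=
  le_trans (norm_mul_le _ _)
    (mul_le_mul hx hy (norm_nonneg _) (le_trans (norm_nonneg _) hx))

lemma bnd3 {x y z : 𝔸} {a b c : ℝ} (hx : ‖x‖ ≤ a) (hy : ‖y‖ ≤ b) (hz : ‖z‖ ≤ c) :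
    ‖x * (y * z)‖ ≤ a * (b * c) := bnd2 hx (bnd2 hy hz)

end Aux

open Matrix
attribute [local instance] Matrix.linftyOpNormedAddCommGroup Matrix.linftyOpNormedRing
  Matrix.linftyOpNormedAlgebra

/-- The fourth-order multi-product expansion
`T₄ h = -(1/3) T₂ h + (4/3) (T₂ (h/2))²`, with
`T₂ h = e^{(h/2)B} e^{hA} e^{(h/2)B}`, satisfies `T₄ h = e^{h(A+B)} + O(h⁵)`. -/
theorem mpe_fourth_order (n : ℕ)
    (A B : Matrix (Fin n) (Fin n) ℝ)
    (T₂ : ℝ → Matrix (Fin n) (Fin n) ℝ)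
    (hT₂ : ∀ h : ℝ, T₂ h = NormedSpace.exp ((h / 2) • B) * NormedSpace.exp (h • A) *
        NormedSpace.exp ((h / 2) • B)) :
    ∃ C δ : ℝ, 0 < C ∧ 0 < δ ∧ ∀ h : ℝ, |h| ≤ δ →
      ‖(-(1 / 3 : ℝ)) • T₂ h + (4 / 3 : ℝ) • (T₂ (h / 2) * T₂ (h / 2)) -
        NormedSpace.exp (h • (A + B))‖ ≤ C * |h| ^ 5 := by
  obtain ⟨cA, hcA0, hcA⟩ := bound_on_unit (fun t : ℝ => NormedSpace.exp (t • A))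
    (NormedSpace.exp_continuous.comp (continuous_id.smul continuous_const))
  obtain ⟨cB, hcB0, hcB⟩ := bound_on_unit (fun t : ℝ => NormedSpace.exp (t • B))
    (NormedSpace.exp_continuous.comp (continuous_id.smul continuous_const))
  obtain ⟨tA, htA0, htA⟩ := bound_on_unit (fun t : ℝ => trunc A t) (trunc_continuous A)
  obtain ⟨tB, htB0, htB⟩ := bound_on_unit (fun t : ℝ => trunc B t) (trunc_continuous B)
  obtain ⟨cW, hcW0, hcW⟩ := bound_on_unit (fun t : ℝ => pev (Cf A B) 5 t) (pev_continuous _ _)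
  obtain ⟨cG, hcG0, hcG⟩ := bound_on_unit (fun t : ℝ => pev (Gf A B) 8 t) (pev_continuous _ _)
  obtain ⟨cG2, hcG20, hcG2⟩ := bound_on_unit (fun t : ℝ => pev (G2f A B) 4 t) (pev_continuous _ _)
  set K : ℝ := Real.exp ‖B‖ * (cA * cB) + (tB * (Real.exp ‖A‖ * cB) + (tB * (tA *
    Real.exp ‖B‖) + cG)) with hKdef
  have key1 : ∀ t : ℝ, |t| ≤ 1 → ‖T₂ t - pev (Cf A B) 5 t‖ ≤ K * |t| ^ 5 := by
    intro t ht
    have ht2 : |t / 2| ≤ |t| := by rw [abs_div, abs_two]; linarith [abs_nonneg t]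
    have ht2' : |t / 2| ≤ 1 := le_trans ht2 ht
    have hp5 : |t / 2| ^ 5 ≤ |t| ^ 5 := pow_le_pow_left₀ (abs_nonneg _) ht2 5
    have hEB : ‖NormedSpace.exp ((t / 2) • B) - trunc B (t / 2)‖ ≤ Real.exp ‖B‖ * |t| ^ 5 :=
      le_trans (exp_sub_trunc B (t / 2) ht2')
        (mul_le_mul_of_nonneg_left hp5 (Real.exp_pos _).le)
    have dec : T₂ t - pev (Cf A B) 5 t =
        (NormedSpace.exp ((t / 2) • B) - trunc B (t / 2)) *
          (NormedSpace.exp (t • A) * NormedSpace.exp ((t / 2) • B))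
        + (trunc B (t / 2) *
            ((NormedSpace.exp (t • A) - trunc A t) * NormedSpace.exp ((t / 2) • B))
        + (trunc B (t / 2) *
            (trunc A t * (NormedSpace.exp ((t / 2) • B) - trunc B (t / 2)))
        + t ^ 5 • pev (Gf A B) 8 t)) := by
      have hW : pev (Cf A B) 5 t =
          trunc B (t / 2) * (trunc A t * trunc B (t / 2)) - t ^ 5 • pev (Gf A B) 8 t := by
        rw [ident1 A B t]; abel
      rw [hT₂ t, hW]
      generalize t ^ 5 • pev (Gf A B) 8 t = X
      noncomm_ring
    rw [dec]
    have tri : ∀ X1 X2 X3 X4 : Matrix (Fin n) (Fin n) ℝ,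
        ‖X1 + (X2 + (X3 + X4))‖ ≤ ‖X1‖ + (‖X2‖ + (‖X3‖ + ‖X4‖)) := by
      intro X1 X2 X3 X4
      refine le_trans (norm_add_le _ _) (add_le_add_right ?_ _)
      exact le_trans (norm_add_le _ _) (add_le_add_right (norm_add_le _ _) _)
    refine le_trans (tri _ _ _ _) ?_
    have b1 := bnd3 hEB (hcA t ht) (hcB (t / 2) ht2')
    have b2 := bnd2 (htB (t / 2) ht2') (bnd2 (exp_sub_trunc A t ht) (hcB (t / 2) ht2'))
    have b3 := bnd3 (htB (t / 2) ht2') (htA t ht) hEB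
    have b4 : ‖t ^ 5 • pev (Gf A B) 8 t‖ ≤ cG * |t| ^ 5 := by
      rw [norm_smul, Real.norm_eq_abs, abs_pow, mul_comm]
      exact mul_le_mul_of_nonneg_right (hcG t ht) (by positivity)
    calc ‖_‖ + (‖_‖ + (‖_‖ + ‖_‖))
        ≤ Real.exp ‖B‖ * |t| ^ 5 * (cA * cB) + (tB * (Real.exp ‖A‖ * |t| ^ 5 * cB) +
            (tB * (tA * (Real.exp ‖B‖ * |t| ^ 5)) + cG * |t| ^ 5)) := by
          exact add_le_add b1 (add_le_add b2 (add_le_add b3 b4))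
      _ = K * |t| ^ 5 := by rw [hKdef]; ring
  have hK0 : 0 ≤ K := le_trans (norm_nonneg _) (by simpa using key1 1 (by norm_num))
  have hsum0 : 0 ≤ cW * K + (K * cW + K * K) :=
    add_nonneg (mul_nonneg hcW0 hK0) (add_nonneg (mul_nonneg hK0 hcW0) (mul_nonneg hK0 hK0))
  refine ⟨cG2 + (K + ((4 : ℝ) / 3 * (cW * K + (K * cW + K * K)) + Real.exp ‖A + B‖)) + 1, 1,
    by nlinarith [(Real.exp_pos ‖A + B‖).le, hcG20, hK0], one_pos, ?_⟩
  intro h h1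
  have hh2 : |h / 2| ≤ |h| := by rw [abs_div, abs_two]; linarith [abs_nonneg h]
  have hh2' : |h / 2| ≤ 1 := le_trans hh2 h1
  have hp5 : |h / 2| ^ 5 ≤ |h| ^ 5 := pow_le_pow_left₀ (abs_nonneg _) hh2 5
  have hp1 : |h| ^ 5 ≤ 1 := pow_le_one₀ (abs_nonneg h) h1
  have hR : ‖T₂ h - pev (Cf A B) 5 h‖ ≤ K * |h| ^ 5 := key1 h h1
  have hR2 : ‖T₂ (h / 2) - pev (Cf A B) 5 (h / 2)‖ ≤ K * |h| ^ 5 :=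
    le_trans (key1 (h / 2) hh2') (mul_le_mul_of_nonneg_left hp5 hK0)
  have hR2' : ‖T₂ (h / 2) - pev (Cf A B) 5 (h / 2)‖ ≤ K :=
    le_trans hR2 (mul_le_of_le_one_right hK0 hp1)
  have hRAB : ‖NormedSpace.exp (h • (A + B)) - trunc (A + B) h‖ ≤
      Real.exp ‖A + B‖ * |h| ^ 5 := exp_sub_trunc (A + B) h h1
  have main_id : (-(1 / 3 : ℝ)) • T₂ h + (4 / 3 : ℝ) • (T₂ (h / 2) * T₂ (h / 2)) -
      NormedSpace.exp (h • (A + B))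
      = h ^ 5 • pev (G2f A B) 4 h
        + ((-(1 / 3 : ℝ)) • (T₂ h - pev (Cf A B) 5 h)
        + ((4 / 3 : ℝ) • (pev (Cf A B) 5 (h / 2) * (T₂ (h / 2) - pev (Cf A B) 5 (h / 2))
            + ((T₂ (h / 2) - pev (Cf A B) 5 (h / 2)) * pev (Cf A B) 5 (h / 2)
            + (T₂ (h / 2) - pev (Cf A B) 5 (h / 2)) * (T₂ (h / 2) - pev (Cf A B) 5 (h / 2))))
        - (NormedSpace.exp (h • (A + B)) - trunc (A + B) h))) := by
    rw [← ident2 A B h]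
    simp only [mul_sub, sub_mul]
    module
  rw [main_id]
  have n1 : ‖h ^ 5 • pev (G2f A B) 4 h‖ ≤ cG2 * |h| ^ 5 := by
    rw [norm_smul, Real.norm_eq_abs, abs_pow, mul_comm]
    exact mul_le_mul_of_nonneg_right (hcG2 h h1) (by positivity)
  have n2 : ‖(-(1 / 3 : ℝ)) • (T₂ h - pev (Cf A B) 5 h)‖ ≤ 1 / 3 * (K * |h| ^ 5) := by
    rw [norm_smul, Real.norm_eq_abs]
    have : |(-(1 / 3 : ℝ))| = 1 / 3 := by norm_num
    rw [this]
    exact mul_le_mul_of_nonneg_left hR (by norm_num)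
  have hS : ‖pev (Cf A B) 5 (h / 2) * (T₂ (h / 2) - pev (Cf A B) 5 (h / 2))
      + ((T₂ (h / 2) - pev (Cf A B) 5 (h / 2)) * pev (Cf A B) 5 (h / 2)
      + (T₂ (h / 2) - pev (Cf A B) 5 (h / 2)) * (T₂ (h / 2) - pev (Cf A B) 5 (h / 2)))‖
      ≤ cW * (K * |h| ^ 5) + (K * |h| ^ 5 * cW + K * (K * |h| ^ 5)) :=
    le_trans (norm_add_le _ _) (add_le_add (bnd2 (hcW (h / 2) hh2') hR2)
      (le_trans (norm_add_le _ _) (add_le_add (bnd2 hR2 (hcW (h / 2) hh2'))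
        (bnd2 hR2' hR2))))
  have n3 : ‖(4 / 3 : ℝ) • (pev (Cf A B) 5 (h / 2) * (T₂ (h / 2) - pev (Cf A B) 5 (h / 2))
      + ((T₂ (h / 2) - pev (Cf A B) 5 (h / 2)) * pev (Cf A B) 5 (h / 2)
      + (T₂ (h / 2) - pev (Cf A B) 5 (h / 2)) * (T₂ (h / 2) - pev (Cf A B) 5 (h / 2))))‖
      ≤ 4 / 3 * (cW * (K * |h| ^ 5) + (K * |h| ^ 5 * cW + K * (K * |h| ^ 5))) := by
    rw [norm_smul, Real.norm_eq_abs]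
    have : |(4 / 3 : ℝ)| = 4 / 3 := by norm_num
    rw [this]
    exact mul_le_mul_of_nonneg_left hS (by norm_num)
  calc ‖_ + (_ + (_ - _))‖
      ≤ ‖h ^ 5 • pev (G2f A B) 4 h‖ + (‖(-(1 / 3 : ℝ)) • (T₂ h - pev (Cf A B) 5 h)‖ +
          (‖(4 / 3 : ℝ) • (pev (Cf A B) 5 (h / 2) * (T₂ (h / 2) - pev (Cf A B) 5 (h / 2))
          + ((T₂ (h / 2) - pev (Cf A B) 5 (h / 2)) * pev (Cf A B) 5 (h / 2)
          + (T₂ (h / 2) - pev (Cf A B) 5 (h / 2)) * (T₂ (h / 2) - pev (Cf A B) 5 (h / 2))))‖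
          + ‖NormedSpace.exp (h • (A + B)) - trunc (A + B) h‖)) := by
        refine le_trans (norm_add_le _ _) (add_le_add_right ?_ _)
        exact le_trans (norm_add_le _ _) (add_le_add_right (norm_sub_le _ _) _)
    _ ≤ cG2 * |h| ^ 5 + (1 / 3 * (K * |h| ^ 5) +
          (4 / 3 * (cW * (K * |h| ^ 5) + (K * |h| ^ 5 * cW + K * (K * |h| ^ 5)))
          + Real.exp ‖A + B‖ * |h| ^ 5)) :=
        add_le_add n1 (add_le_add n2 (add_le_add n3 hRAB))
    _ = (cG2 + (1 / 3 * K + (4 / 3 * (cW * K + (K * cW + K * K)) + Real.exp ‖A + B‖)))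
          * |h| ^ 5 := by ring
    _ ≤ (cG2 + (K + ((4 : ℝ) / 3 * (cW * K + (K * cW + K * K)) + Real.exp ‖A + B‖)) + 1)
          * |h| ^ 5 := by
        refine mul_le_mul_of_nonneg_right (by linarith) (by positivity)
end
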